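/- Let R be a ring, C a totally acyclic complex of R-modules, and C' a chain complex of finitely generated free R-modules. Fix an integer l, and suppose given R-linear maps γ_n : C_n → C'_n for all n > l satisfying d'_{n+1}∘γ_{n+1} = γ_n∘d_{n+1} for all n > l. Then there exist R-linear maps γ_n : C_n → C'_n for all n ≤ l such that the resulting full family (γ_n)_{n∈ℤ} is a chain map C → C', i.e. d'_{n+1}∘γ_{n+1} = γ_n∘d_{n+1} for all n ∈ ℤ. -/

import Mathlib

/-!
Statement 1: a family of maps from a totally acyclic complex `C` to a complex `C'` of
finitely generated free modules, defined and commuting with the differentials in degrees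
`> l`, extends to a chain map defined in all degrees.
-/

universe u v

/-- A ℤ-indexed chain complex of left `R`-modules. -/
structure ZComplex (R : Type u) [Ring R] where
  X : ℤ → Type v
  [acg : ∀ n, AddCommGroup (X n)]
  [mod : ∀ n, Module R (X n)]
  d : ∀ n : ℤ, X (n + 1) →ₗ[R] X n
  dd : ∀ (n : ℤ) (x : X (n + 1 + 1)), d n (d (n + 1) x) = 0

attribute [instance] ZComplex.acg ZComplex.mod

variable {R : Type u} [Ring R]

/-- `C` is totally acyclic: all modules are finitely generated free, `C` is exact,
and the dual complex `Hom_R(C, R)` is exact. -/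
def ZComplex.IsTotallyAcyclic (C : ZComplex R) : Prop :=
  (∀ n, Module.Free R (C.X n)) ∧ (∀ n, Module.Finite R (C.X n)) ∧
  (∀ n : ℤ, LinearMap.ker (C.d n) = LinearMap.range (C.d (n + 1))) ∧
  (∀ (n : ℤ) (g : C.X (n + 1) →ₗ[R] R), (∀ x, g (C.d (n + 1) x) = 0) →
    ∃ h : C.X n →ₗ[R] R, ∀ x, g x = h (C.d n x))

/-- One-step extension: given compatible maps in degrees `n+1` and `n+2`, produce a map in
degree `n` commuting with the one in degree `n+1`. -/
theorem ZComplex.step_exists (C C' : ZComplex R) (hC : C.IsTotallyAcyclic)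
    (hfree : ∀ n, Module.Free R (C'.X n)) (hfin : ∀ n, Module.Finite R (C'.X n))
    (n : ℤ) (γ1 : C.X (n+1) →ₗ[R] C'.X (n+1)) (γ2 : C.X (n+1+1) →ₗ[R] C'.X (n+1+1))
    (hcompat : ∀ x, γ1 (C.d (n+1) x) = C'.d (n+1) (γ2 x)) :
    ∃ f : C.X n →ₗ[R] C'.X n, ∀ x, f (C.d n x) = C'.d n (γ1 x) := by
  classical
  haveI := hfree n
  haveI := hfin n
  set φ : C.X (n+1) →ₗ[R] C'.X n := (C'.d n).comp γ1 with hφ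
  have hφ0 : ∀ x, φ (C.d (n+1) x) = 0 := by
    intro x
    simp only [hφ, LinearMap.comp_apply]
    rw [hcompat x]
    exact C'.dd n (γ2 x)
  let b := Module.Free.chooseBasis R (C'.X n)
  have hcoord : ∀ i, ∃ h : C.X n →ₗ[R] R,
      ∀ x, (b.coord i).comp φ x = h (C.d n x) := by
    intro i
    refine hC.2.2.2 n ((b.coord i).comp φ) ?_
    intro x
    simp only [LinearMap.comp_apply, hφ0 x, map_zero]
  choose h hh using hcoord
  refine ⟨∑ i, (LinearMap.toSpanSingleton R (C'.X n) (b i)).comp (h i), ?_⟩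
  intro x
  have : ∀ i, h i (C.d n x) = b.repr (φ x) i := by
    intro i
    rw [← hh i x]
    simp [Module.Basis.coord_apply]
  simp only [LinearMap.sum_apply, LinearMap.comp_apply,
    LinearMap.toSpanSingleton_apply, this]
  have := b.sum_repr (φ x)
  rw [this]
  simp [hφ]

/-- Recursive construction of the extended chain map, carrying the map one degree up and
the compatibility between them. -/
noncomputable def ZComplex.extAux (C C' : ZComplex R) (hC : C.IsTotallyAcyclic)
    (hfree : ∀ n, Module.Free R (C'.X n)) (hfin : ∀ n, Module.Finite R (C'.X n))
    (l : ℤ) (γ : ∀ n : ℤ, l < n → (C.X n →ₗ[R] C'.X n))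
    (hγ : ∀ (n : ℤ) (hn : l < n) (x : C.X (n + 1)),
      γ n hn (C.d n x) = C'.d n (γ (n + 1) (by linarith) x)) :
    ∀ n : ℤ, Σ' (f : C.X n →ₗ[R] C'.X n) (g : C.X (n+1) →ₗ[R] C'.X (n+1)),
      ∀ x, f (C.d n x) = C'.d n (g x) :=
  fun n =>
    if h : l < n then ⟨γ n h, γ (n+1) (by linarith), hγ n h⟩
    else
      let p := ZComplex.extAux C C' hC hfree hfin l γ hγ (n+1)
      ⟨(ZComplex.step_exists C C' hC hfree hfin n p.1 p.2.1 p.2.2).choose, p.1,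
        (ZComplex.step_exists C C' hC hfree hfin n p.1 p.2.1 p.2.2).choose_spec⟩
termination_by n => (l + 1 - n).toNat
decreasing_by simp only [not_lt] at h; omega

/-- a partially defined chain map from a totally acyclic complex to a
complex of finitely generated free modules, given in degrees `> l`, can be completed to a
chain map in all degrees. -/
theorem chain_map_extends_downward
    (C C' : ZComplex R)
    (hC : C.IsTotallyAcyclic)
    (hfree : ∀ n, Module.Free R (C'.X n)) (hfin : ∀ n, Module.Finite R (C'.X n))
    (l : ℤ)
    (γ : ∀ n : ℤ, l < n → (C.X n →ₗ[R] C'.X n))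
    (hγ : ∀ (n : ℤ) (hn : l < n) (x : C.X (n + 1)),
      γ n hn (C.d n x) = C'.d n (γ (n + 1) (by omega) x)) :
    ∃ γ' : ∀ n : ℤ, C.X n →ₗ[R] C'.X n,
      (∀ (n : ℤ) (hn : l < n), γ' n = γ n hn) ∧
      (∀ (n : ℤ) (x : C.X (n + 1)), γ' n (C.d n x) = C'.d n (γ' (n + 1) x)) := by
  classical
  set D := ZComplex.extAux C C' hC hfree hfin l γ hγ with hD
  have hDpos : ∀ (n : ℤ) (hn : l < n), D n = ⟨γ n hn, γ (n+1) (by omega), hγ n hn⟩ := by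
    intro n hn
    rw [hD, ZComplex.extAux, dif_pos hn]
  have hcoh : ∀ n : ℤ, (D n).2.1 = (D (n+1)).1 := by
    intro n
    by_cases hn : l < n
    · rw [hDpos n hn, hDpos (n+1) (by omega)]
    · conv_lhs => rw [hD, ZComplex.extAux, dif_neg hn]
  refine ⟨fun n => (D n).1, ?_, ?_⟩
  · intro n hn
    show (D n).1 = γ n hn
    rw [hDpos n hn]
  · intro n x
    show (D n).1 (C.d n x) = C'.d n ((D (n+1)).1 x)
    rw [← hcoh n]
    exact (D n).2.2 x
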